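/- Let G be a standard real Gaussian random variable, and let Ξ > 0, ρ > 0 and b > 0. Set u = 2ρb/Ξ and R = 2Q(u). Then E[ min_{|x| ≤ b} (ΞG·x + ρx²) ] = Rρb² − (1 − R)·Ξ²/(4ρ) − (bΞ/√(2π))·exp(−u²/2). -/

import Mathlib

open MeasureTheory ProbabilityTheory

/-- Gaussian tail probability `Q(t) = P(G > t)` for a standard Gaussian `G`. -/
noncomputable def gaussQ (t : ℝ) : ℝ := (gaussianReal 0 1 {x | t < x}).toReal

open Real Filter Set

noncomputable def stdp (x : ℝ) : ℝ := (Real.sqrt (2*Real.pi))⁻¹ * Real.exp (-x^2/2)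

lemma stdp_eq : gaussianPDFReal 0 1 = stdp := by
  ext x
  simp only [gaussianPDFReal, stdp, NNReal.coe_one, mul_one, sub_zero]

lemma stdp_nonneg (x : ℝ) : 0 ≤ stdp x := by
  unfold stdp; positivity

lemma stdp_even (x : ℝ) : stdp (-x) = stdp x := by
  simp [stdp, neg_pow]

lemma stdp_cont : Continuous stdp := by
  unfold stdp
  fun_prop

lemma integrable_stdp : Integrable stdp := stdp_eq ▸ integrable_gaussianPDFReal 0 1

lemma integral_stdp : ∫ x, stdp x = 1 := stdp_eq ▸ integral_gaussianPDFReal_eq_one 0 one_ne_zero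

lemma integrable_mul_stdp : Integrable (fun x => x * stdp x) := by
  have h := (integrable_mul_exp_neg_mul_sq (b := 1/2) (by norm_num)).const_mul
    ((Real.sqrt (2*Real.pi))⁻¹)
  refine h.congr ?_
  filter_upwards with x
  simp only [stdp]
  ring_nf

lemma hasDerivAt_stdp (x : ℝ) : HasDerivAt stdp (-x * stdp x) x := by
  have h1 : HasDerivAt (fun x : ℝ => -x^2/2) (-x) x := by
    have := ((hasDerivAt_pow 2 x).neg).div_const 2
    refine this.congr_deriv ?_
    push_cast
    ring
  have h2 := (h1.exp).const_mul ((Real.sqrt (2*Real.pi))⁻¹)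
  refine h2.congr_deriv ?_
  simp [stdp]; ring

lemma tendsto_stdp : Tendsto stdp atTop (nhds 0) := by
  have h1 : Tendsto (fun x : ℝ => -x^2/2) atTop atBot := by
    have : Tendsto (fun x : ℝ => x^2/2) atTop atTop :=
      (tendsto_pow_atTop two_ne_zero).atTop_div_const (by norm_num)
    simpa [neg_div] using tendsto_neg_atBot_iff.mpr this
  have h2 : Tendsto (fun x : ℝ => Real.exp (-x^2/2)) atTop (nhds 0) :=
    Real.tendsto_exp_atBot.comp h1
  have := h2.const_mul ((Real.sqrt (2*Real.pi))⁻¹)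
  rw [mul_zero] at this
  exact this

lemma gaussQ_eq (t : ℝ) : gaussQ t = ∫ x in Ioi t, stdp x := by
  have hs : {x : ℝ | t < x} = Ioi t := rfl
  rw [gaussQ, gaussianReal_apply_eq_integral 0 one_ne_zero, hs, stdp_eq,
    ENNReal.toReal_ofReal]
  exact setIntegral_nonneg measurableSet_Ioi fun x _ => stdp_nonneg x

lemma integral_Ioi_mul_stdp (u : ℝ) : ∫ x in Ioi u, x * stdp x = stdp u := by
  have hderiv : ∀ x ∈ Ici u, HasDerivAt (fun y => -stdp y) (x * stdp x) x := by
    intro x _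
    have := (hasDerivAt_stdp x).neg
    refine this.congr_deriv ?_
    ring
  have := integral_Ioi_of_hasDerivAt_of_tendsto' hderiv
    integrable_mul_stdp.integrableOn (by simpa using tendsto_stdp.neg)
  simpa using this

lemma integral_Iic_stdp (u : ℝ) : ∫ x in Iic (-u), stdp x = gaussQ u := by
  have h := integral_comp_neg_Iic (-u) stdp
  rw [neg_neg] at h
  rw [gaussQ_eq, ← h]
  exact setIntegral_congr_fun measurableSet_Iic fun x _ => (stdp_even x).symm

lemma integral_Iic_mul_stdp (u : ℝ) : ∫ x in Iic (-u), x * stdp x = -(stdp u) := by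
  have h := integral_comp_neg_Iic (-u) (fun x => x * stdp x)
  rw [neg_neg, integral_Ioi_mul_stdp] at h
  have h2 : ∫ x in Iic (-u), (-x) * stdp (-x) = - ∫ x in Iic (-u), x * stdp x := by
    rw [← integral_neg]
    exact setIntegral_congr_fun measurableSet_Iic fun x _ => by rw [stdp_even]; ring
  rw [h2] at h
  linarith

lemma integral_Ioc_stdp (u : ℝ) (hu : 0 ≤ u) :
    ∫ x in Ioc (-u) u, stdp x = 1 - 2 * gaussQ u := by
  have huu : (-u : ℝ) ≤ u := by linarith
  have h1 : (∫ x in Iic (-u), stdp x) + ∫ x in Ioi (-u), stdp x = 1 := by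
    rw [intervalIntegral.integral_Iic_add_Ioi integrable_stdp.integrableOn integrable_stdp.integrableOn,
      integral_stdp]
  have h2 : (∫ x in Ioc (-u) u, stdp x) + ∫ x in Ioi u, stdp x
      = ∫ x in Ioi (-u), stdp x := by
    rw [← setIntegral_union (Ioc_disjoint_Ioi le_rfl) measurableSet_Ioi
      integrable_stdp.integrableOn integrable_stdp.integrableOn,
      Ioc_union_Ioi_eq_Ioi huu]
  have h3 := integral_Iic_stdp u
  have h4 := gaussQ_eq u
  linarith

lemma integral_Ioc_sq_stdp (u : ℝ) (hu : 0 ≤ u) :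
    ∫ x in Ioc (-u) u, x^2 * stdp x = (1 - 2 * gaussQ u) - 2 * u * stdp u := by
  have huu : (-u : ℝ) ≤ u := by linarith
  have hcont : Continuous fun x : ℝ => (x^2 - 1) * stdp x :=
    (by continuity : Continuous fun x : ℝ => x^2 - 1).mul stdp_cont
  have hderiv : ∀ x ∈ uIcc (-u) u,
      HasDerivAt (fun y => -(y * stdp y)) ((x^2 - 1) * stdp x) x := by
    intro x _
    have := ((hasDerivAt_id x).mul (hasDerivAt_stdp x)).neg
    refine this.congr_deriv ?_
    simp only [id_eq]
    ring
  have hftc := intervalIntegral.integral_eq_sub_of_hasDerivAt hderiv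
    (hcont.intervalIntegrable _ _)
  rw [intervalIntegral.integral_of_le huu] at hftc
  have hval : (∫ x in Ioc (-u) u, (x^2 - 1) * stdp x) = -(2 * u * stdp u) := by
    rw [hftc, stdp_even]; ring
  have hsplit : ∫ x in Ioc (-u) u, x^2 * stdp x
      = (∫ x in Ioc (-u) u, (x^2 - 1) * stdp x) + ∫ x in Ioc (-u) u, stdp x := by
    rw [← integral_add (hcont.integrableOn_Ioc) integrable_stdp.integrableOn]
    exact setIntegral_congr_fun measurableSet_Ioc fun x _ => by ring
  rw [hsplit, hval, integral_Ioc_stdp u hu]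
  ring

lemma integral_gaussianReal_eq (f : ℝ → ℝ) :
    ∫ x, f x ∂(gaussianReal 0 1) = ∫ x, f x * stdp x := by
  rw [gaussianReal_of_var_ne_zero 0 one_ne_zero]
  have hd : gaussianPDF 0 1 = fun x => ((stdp x).toNNReal : ENNReal) := by
    ext x
    rw [gaussianPDF, stdp_eq]
    rfl
  rw [hd, integral_withDensity_eq_integral_smul
    (show Measurable fun x => (stdp x).toNNReal from
      measurable_real_toNNReal.comp stdp_cont.measurable) f]
  refine integral_congr_ae (Filter.Eventually.of_forall fun x => ?_)
  dsimp only
  rw [NNReal.smul_def, Real.coe_toNNReal _ (stdp_nonneg x), smul_eq_mul, mul_comm]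

lemma sInf_quadratic (Ξ ρ b g : ℝ) (hΞ : 0 < Ξ) (hρ : 0 < ρ) (hb : 0 < b) :
    sInf ((fun x : ℝ => Ξ * g * x + ρ * x ^ 2) '' Set.Icc (-b) b)
      = if |g| ≤ 2*ρ*b/Ξ then -(Ξ^2*g^2)/(4*ρ) else ρ*b^2 - Ξ * |g| * b := by
  set f : ℝ → ℝ := fun x => Ξ * g * x + ρ * x ^ 2 with hf
  have key : ∀ x₀ ∈ Icc (-b) b, (∀ x ∈ Icc (-b) b, f x₀ ≤ f x) →
      sInf (f '' Icc (-b) b) = f x₀ := by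
    intro x₀ hx₀ hlb
    apply le_antisymm
    · exact csInf_le ⟨f x₀, by rintro y ⟨x, hx, rfl⟩; exact hlb x hx⟩ ⟨x₀, hx₀, rfl⟩
    · exact le_csInf ⟨f x₀, ⟨x₀, hx₀, rfl⟩⟩ (by rintro y ⟨x, hx, rfl⟩; exact hlb x hx)
  rcases le_or_gt |g| (2*ρ*b/Ξ) with hg | hg
  · rw [if_pos hg]
    have hg' : |g| * Ξ ≤ 2*ρ*b := (le_div_iff₀ hΞ).1 hg
    have hb1 : -(Ξ*g/(2*ρ)) ∈ Icc (-b) b := by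
      have h1 : |Ξ*g/(2*ρ)| ≤ b := by
        rw [abs_div, abs_mul, abs_of_pos hΞ, abs_of_pos (by positivity : (0:ℝ) < 2*ρ),
          div_le_iff₀ (by positivity : (0:ℝ) < 2*ρ)]
        nlinarith [abs_nonneg g]
      have h2 := abs_le.1 h1
      exact ⟨by linarith [h2.2], by linarith [h2.1]⟩
    have hval : f (-(Ξ*g/(2*ρ))) = -(Ξ^2*g^2)/(4*ρ) := by
      simp only [hf]
      field_simp
      ring
    have hbound : ∀ x ∈ Icc (-b) b, f (-(Ξ*g/(2*ρ))) ≤ f x := by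
      intro x hx
      rw [hval]
      simp only [hf]
      rw [div_le_iff₀ (by positivity : (0:ℝ) < 4*ρ)]
      nlinarith [sq_nonneg (2*ρ*x + Ξ*g)]
    rw [key _ hb1 hbound, hval]
  · rw [if_neg (not_le.2 hg)]
    rcases le_or_gt 0 g with hgs | hgs
    · rw [abs_of_nonneg hgs] at hg ⊢
      have hub : 2*ρ*b < g * Ξ := (div_lt_iff₀ hΞ).1 hg
      have hmem : (-b : ℝ) ∈ Icc (-b) b := ⟨le_rfl, by linarith⟩
      have hbound : ∀ x ∈ Icc (-b) b, f (-b) ≤ f x := by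
        intro x hx
        simp only [hf]
        nlinarith [mul_nonneg (by linarith [hx.1] : (0:ℝ) ≤ x + b)
          (by nlinarith [hx.1, hx.2, hρ.le, hub] : (0:ℝ) ≤ Ξ*g + ρ*(x - b))]
      rw [key _ hmem hbound, hf]
      ring
    · rw [abs_of_neg hgs] at hg ⊢
      have hub : 2*ρ*b < -g * Ξ := (div_lt_iff₀ hΞ).1 hg
      have hmem : (b : ℝ) ∈ Icc (-b) b := ⟨by linarith, le_rfl⟩
      have hbound : ∀ x ∈ Icc (-b) b, f b ≤ f x := by
        intro x hx
        simp only [hf]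
        nlinarith [mul_nonneg (by linarith [hx.2] : (0:ℝ) ≤ b - x)
          (by nlinarith [hx.1, hx.2, hρ.le, hub] : (0:ℝ) ≤ -(Ξ*g) - ρ*(x + b))]
      rw [key _ hmem hbound, hf]
      ring

theorem stmt15 (Ξ ρ b : ℝ) (hΞ : 0 < Ξ) (hρ : 0 < ρ) (hb : 0 < b) :
    ∫ g : ℝ, sInf ((fun x : ℝ => Ξ * g * x + ρ * x ^ 2) '' Set.Icc (-b) b)
        ∂(gaussianReal 0 1)
      = (2 * gaussQ (2 * ρ * b / Ξ)) * ρ * b ^ 2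
        - (1 - 2 * gaussQ (2 * ρ * b / Ξ)) * Ξ ^ 2 / (4 * ρ)
        - (b * Ξ / Real.sqrt (2 * Real.pi)) * Real.exp (-(2 * ρ * b / Ξ) ^ 2 / 2) := by
  have hSpos : (0:ℝ) < Real.sqrt (2*Real.pi) := Real.sqrt_pos.2 (by positivity)
  set u : ℝ := 2*ρ*b/Ξ with hu_def
  have hupos : 0 < u := by rw [hu_def]; positivity
  have hΞu : Ξ * u = 2*ρ*b := by rw [hu_def]; field_simp
  set m : ℝ → ℝ := fun g => if |g| ≤ u then -(Ξ^2*g^2)/(4*ρ) else ρ*b^2 - Ξ * |g| * b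
    with hm
  have hsInf : ∀ g : ℝ,
      sInf ((fun x : ℝ => Ξ * g * x + ρ * x ^ 2) '' Set.Icc (-b) b) = m g := by
    intro g
    rw [sInf_quadratic Ξ ρ b g hΞ hρ hb]
  rw [integral_congr_ae (Filter.Eventually.of_forall hsInf), integral_gaussianReal_eq m]
  have hmeas_m : Measurable m := Measurable.ite
    (measurableSet_le continuous_abs.measurable measurable_const) (by fun_prop) (by fun_prop)
  have habs_stdp : Integrable (fun g : ℝ => |g| * stdp g) := by
    refine integrable_mul_stdp.abs.congr (Filter.Eventually.of_forall fun x => ?_)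
    simp only [abs_mul, abs_of_nonneg (stdp_nonneg x)]
  have hbound_int : Integrable (fun g : ℝ => (ρ*b^2 + Ξ*b*|g|) * stdp g) := by
    refine ((integrable_stdp.const_mul (ρ*b^2)).add (habs_stdp.const_mul (Ξ*b))).congr
      (Filter.Eventually.of_forall fun x => ?_)
    simp only [Pi.add_apply]
    ring
  have hInt : Integrable (fun g : ℝ => m g * stdp g) := by
    refine hbound_int.mono' ((hmeas_m.mul stdp_cont.measurable).aestronglyMeasurable)
      (Filter.Eventually.of_forall fun g => ?_)
    rw [Real.norm_eq_abs, abs_mul, abs_of_nonneg (stdp_nonneg g)]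
    refine mul_le_mul_of_nonneg_right ?_ (stdp_nonneg g)
    by_cases hc : |g| ≤ u
    · simp only [hm, if_pos hc]
      have h1 : Ξ * |g| ≤ 2*ρ*b := by
        have := mul_le_mul_of_nonneg_left hc hΞ.le
        linarith [hΞu]
      rw [abs_div, abs_neg, abs_of_nonneg (by positivity : (0:ℝ) ≤ Ξ^2*g^2),
        abs_of_pos (by positivity : (0:ℝ) < 4*ρ),
        div_le_iff₀ (by positivity : (0:ℝ) < 4*ρ)]
      nlinarith [sq_abs g, abs_nonneg g, hρ.le, hb.le, hΞ.le,
        mul_self_le_mul_self (mul_nonneg hΞ.le (abs_nonneg g)) h1,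
        mul_nonneg hρ.le (mul_nonneg (mul_nonneg hΞ.le hb.le) (abs_nonneg g))]
    · simp only [hm, if_neg hc]
      refine abs_le.2 ⟨?_, ?_⟩ <;>
        nlinarith [abs_nonneg g, hρ.le, hb.le, hΞ.le,
          mul_nonneg (mul_nonneg hΞ.le hb.le) (abs_nonneg g)]
  have hIic : ∫ g in Set.Iic (-u), m g * stdp g
      = ρ*b^2 * gaussQ u + Ξ*b*(-(stdp u)) := by
    rw [setIntegral_congr_fun (g := fun g => (ρ*b^2) * stdp g + (Ξ*b) * (g * stdp g))
      measurableSet_Iic ?_]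
    · rw [integral_add ((integrable_stdp.const_mul _).integrableOn)
        ((integrable_mul_stdp.const_mul _).integrableOn),
        integral_const_mul, integral_const_mul, integral_Iic_stdp, integral_Iic_mul_stdp]
    · intro g hg
      simp only [Set.mem_Iic] at hg
      have hgneg : g < 0 := lt_of_le_of_lt hg (by linarith)
      by_cases hc : |g| ≤ u
      · have hgu : g = -u := by
          have := (abs_le.1 hc).1
          linarith
        subst hgu
        have hmval : m (-u) = ρ*b^2 + Ξ*b*(-u) := by
          simp only [hm, if_pos (by rw [abs_neg, abs_of_nonneg hupos.le] : |(-u)| ≤ u)]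
          rw [hu_def]
          field_simp
          ring
        dsimp only
        rw [hmval]; ring
      · have habs : |g| = -g := abs_of_neg hgneg
        simp only [hm, if_neg hc, habs]; ring
  have hIoi : ∫ g in Set.Ioi u, m g * stdp g
      = ρ*b^2 * gaussQ u - Ξ*b*(stdp u) := by
    rw [setIntegral_congr_fun (g := fun g => (ρ*b^2) * stdp g - (Ξ*b) * (g * stdp g))
      measurableSet_Ioi ?_]
    · rw [integral_sub ((integrable_stdp.const_mul _).integrableOn)
        ((integrable_mul_stdp.const_mul _).integrableOn),
        integral_const_mul, integral_const_mul, ← gaussQ_eq, integral_Ioi_mul_stdp]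
    · intro g hg
      simp only [Set.mem_Ioi] at hg
      have hgpos : 0 < g := lt_trans hupos hg
      have hc : ¬ |g| ≤ u := by
        rw [abs_of_pos hgpos]
        linarith
      simp only [hm, if_neg hc, abs_of_pos hgpos]; ring
  have hIoc : ∫ g in Set.Ioc (-u) u, m g * stdp g
      = (-(Ξ^2)/(4*ρ)) * ((1 - 2*gaussQ u) - 2*u*stdp u) := by
    rw [setIntegral_congr_fun (g := fun g => (-(Ξ^2)/(4*ρ)) * (g^2 * stdp g))
      measurableSet_Ioc ?_]
    · rw [integral_const_mul, integral_Ioc_sq_stdp u hupos.le]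
    · intro g hg
      have hc : |g| ≤ u := abs_le.2 ⟨hg.1.le, hg.2⟩
      simp only [hm, if_pos hc]; ring
  have h1 := intervalIntegral.integral_Iic_add_Ioi (b := -u) (μ := volume)
    (f := fun g => m g * stdp g) hInt.integrableOn hInt.integrableOn
  have h2 : (∫ g in Set.Ioc (-u) u, m g * stdp g) + ∫ g in Set.Ioi u, m g * stdp g
      = ∫ g in Set.Ioi (-u), m g * stdp g := by
    rw [← setIntegral_union (Set.Ioc_disjoint_Ioi le_rfl) measurableSet_Ioi
      hInt.integrableOn hInt.integrableOn, Set.Ioc_union_Ioi_eq_Ioi (by linarith : (-u:ℝ) ≤ u)]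
  rw [← h1, ← h2, hIic, hIoi, hIoc]
  have hstdpu : stdp u = Real.exp (-u^2/2) / Real.sqrt (2*Real.pi) := by
    rw [stdp]; ring
  rw [hstdpu, hu_def]
  field_simp
  ring
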